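/- Let r_g and r be real numbers with 0 < r_g < r. Then ∫_{r_g}^{r} (1/√(1 − r_g/x) − 1)/x dx = 2·ln(1 + √(1 − r_g/r)). -/

import Mathlib

open MeasureTheory Real

/-- The Schwarzschild isotropic-map integral in closed form:
∫_{r_g}^{r} (1/√(1 − r_g/x) − 1)/x dx = 2 ln(1 + √(1 − r_g/r)). -/
theorem schwarzschild_isotropic_integral (r_g r : ℝ) (h0 : 0 < r_g) (h : r_g < r) :
    ∫ x in r_g..r, (1 / Real.sqrt (1 - r_g / x) - 1) / x
      = 2 * Real.log (1 + Real.sqrt (1 - r_g / r)) := by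
  set g : ℝ → ℝ := fun x => (1 / Real.sqrt (1 - r_g / x) - 1) / x with hg
  set F : ℝ → ℝ := fun x => 2 * Real.log (1 + Real.sqrt (1 - r_g / x)) with hF
  have hrpos : (0:ℝ) < r := h0.trans h
  -- basic facts
  have key : ∀ x : ℝ, r_g < x →
      0 < 1 - r_g / x ∧ Real.sqrt (1 - r_g / x) < 1 ∧ 0 < x := by
    intro x hx
    have hx0 : 0 < x := h0.trans hx
    have h1 : r_g / x < 1 := (div_lt_one hx0).2 hx
    have h2 : 0 < r_g / x := div_pos h0 hx0
    refine ⟨by linarith, ?_, hx0⟩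
    have hlt : Real.sqrt (1 - r_g / x) < Real.sqrt 1 :=
      Real.sqrt_lt_sqrt (by linarith) (by linarith)
    simpa using hlt
  -- integrability via comparison with (x - r_g)^(-1/2)
  have hint : IntervalIntegrable g volume r_g r := by
    have hbase : IntervalIntegrable (fun x : ℝ => x ^ (-(1:ℝ)/2)) volume 0 (r - r_g) :=
      intervalIntegral.intervalIntegrable_rpow' (by norm_num)
    have hcomp : IntervalIntegrable (fun x : ℝ => (x - r_g) ^ (-(1:ℝ)/2)) volume r_g r := by
      have := hbase.comp_sub_right r_g
      simpa using this
    have hmaj : IntervalIntegrable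
        (fun x : ℝ => (Real.sqrt r / r_g) * (x - r_g) ^ (-(1:ℝ)/2)) volume r_g r :=
      hcomp.smul (Real.sqrt r / r_g)
    refine hmaj.mono_fun ?_ ?_
    · apply Measurable.aestronglyMeasurable
      fun_prop
    · rw [Filter.EventuallyLE, ae_restrict_iff' measurableSet_uIoc]
      filter_upwards with x hx
      rw [Set.uIoc_of_le h.le] at hx
      obtain ⟨hw, hu1, hx0⟩ := key x hx.1
      set u := Real.sqrt (1 - r_g / x) with hu
      have hu0 : 0 < u := Real.sqrt_pos.2 hw
      have hgpos : 0 ≤ g x := by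
        have h1 : (1:ℝ) ≤ 1 / u := (one_le_div hu0).2 hu1.le
        have : 0 ≤ 1 / u - 1 := by linarith
        exact div_nonneg this hx0.le
      have hxr : (0:ℝ) < x - r_g := by linarith [hx.1]
      set s := Real.sqrt (x - r_g) with hs
      set sr := Real.sqrt r with hsr
      have hs0 : 0 < s := Real.sqrt_pos.2 hxr
      have hsr0 : 0 < sr := Real.sqrt_pos.2 hrpos
      have hrpow : (x - r_g) ^ (-(1:ℝ)/2) = s⁻¹ := by
        rw [show (-(1:ℝ)/2) = -(1/2) by norm_num, Real.rpow_neg hxr.le,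
          ← Real.sqrt_eq_rpow]
      rw [Real.norm_of_nonneg hgpos, Real.norm_of_nonneg (by positivity), hrpow]
      -- key bound: u ≥ s / sr
      have hus : s / sr ≤ u := by
        rw [hu, hs, hsr, ← Real.sqrt_div hxr.le]
        apply Real.sqrt_le_sqrt
        rw [div_le_iff₀ hrpos]
        have : 1 - r_g / x = (x - r_g) / x := by field_simp
        rw [this, div_mul_eq_mul_div, le_div_iff₀ hx0]
        nlinarith [hx.2, hx.1]
      calc (1 / u - 1) / x ≤ (1 / u) / x := by
            gcongr <;> linarith
        _ = 1 / (u * x) := by rw [div_div]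
        _ ≤ 1 / ((s / sr) * r_g) :=
            one_div_le_one_div_of_le (by positivity)
              (mul_le_mul hus hx.1.le h0.le hu0.le)
        _ = sr / r_g * s⁻¹ := by
            field_simp
  -- derivative
  have hderiv : ∀ x ∈ Set.Ioo r_g r, HasDerivAt F (g x) x := by
    intro x hx
    obtain ⟨hw, hu1, hx0⟩ := key x hx.1
    set u := Real.sqrt (1 - r_g / x) with hu
    have hu0 : 0 < u := Real.sqrt_pos.2 hw
    have hw' : HasDerivAt (fun y : ℝ => 1 - r_g / y) (r_g / x ^ 2) x := by
      have : HasDerivAt (fun y : ℝ => r_g / y) (-(r_g / x ^ 2)) x := by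
        simpa [div_eq_mul_inv, neg_mul, mul_comm] using
          (hasDerivAt_inv hx0.ne').const_mul r_g
      simpa using this.const_sub (1:ℝ)
    have hsqrt : HasDerivAt (fun y : ℝ => Real.sqrt (1 - r_g / y))
        (r_g / x ^ 2 / (2 * u)) x := by
      have := (Real.hasDerivAt_sqrt hw.ne').comp x hw'
      exact hw'.sqrt hw.ne'
    have h1u : (1 + u) ≠ 0 := by positivity
    have hlog : HasDerivAt (fun y : ℝ => Real.log (1 + Real.sqrt (1 - r_g / y)))
        ((r_g / x ^ 2 / (2 * u)) / (1 + u)) x := by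
      have := (Real.hasDerivAt_log h1u).comp x ((hasDerivAt_const x (1:ℝ)).add hsqrt)
      simpa [Function.comp_def, Pi.add_def, div_eq_mul_inv, mul_comm] using this
    have hD := hlog.const_mul 2
    have hu2 : u ^ 2 = 1 - r_g / x := Real.sq_sqrt hw.le
    have halg : g x = 2 * (r_g / x ^ 2 / (2 * u) / (1 + u)) := by
      have huinv : 1 / u - 1 = (1 - u ^ 2) / (u * (1 + u)) := by
        field_simp
        ring
      have h12 : 1 - u ^ 2 = r_g / x := by rw [hu2]; ring
      show (1 / u - 1) / x = 2 * (r_g / x ^ 2 / (2 * u) / (1 + u))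
      rw [huinv, h12]
      field_simp
    rw [halg]
    exact hD
  have hcont : ContinuousOn F (Set.Icc r_g r) := by
    apply ContinuousOn.mul continuousOn_const
    apply ContinuousOn.log
    · apply ContinuousOn.add continuousOn_const
      apply ContinuousOn.sqrt
      apply ContinuousOn.sub continuousOn_const
      exact continuousOn_const.div continuousOn_id fun x hx => (h0.trans_le hx.1).ne'
    · intro x hx
      positivity
  have hfin := intervalIntegral.integral_eq_sub_of_hasDerivAt_of_le h.le hcont hderiv hint
  rw [hfin, hF]
  simp [div_self h0.ne']
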